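/- Let R be the category whose objects are quadruples (A, B, ε, μ) with A a finite distributive ⟨∨,0⟩-semilattice, B a finite Boolean ⟨∨,0⟩-semilattice, ε : A → B and μ : B → A ⟨∨,0⟩-homomorphisms with μ ∘ ε = id_A, and whose morphisms (A,B,ε,μ) → (A',B',ε',μ') are pairs (f,g) with f : A → A' and g : B → B' ⟨∨,0⟩-embeddings satisfying g ∘ ε = ε' ∘ f and μ' ∘ g = f ∘ μ. Let Π : R → D be the projection functor to the category D of finite distributive ⟨∨,0⟩-semilattices with ⟨∨,0⟩-embeddings, sending (A,B,ε,μ) to A and (f,g) to f. Then Π has neither a right adjoint nor a left adjoint. -/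

import Mathlib

universe u

open CategoryTheory

/-- A join-semilattice is distributive if whenever `c ≤ a ⊔ b` there are
`x ≤ a` and `y ≤ b` with `c = x ⊔ y`. -/
def SupDistrib (α : Type*) [SemilatticeSup α] : Prop :=
  ∀ a b c : α, c ≤ a ⊔ b → ∃ x y, x ≤ a ∧ y ≤ b ∧ c = x ⊔ y

/-- A `⟨∨,0⟩`-homomorphism: preserves binary joins and the least element. -/
def IsSupBotHom {α β : Type*} [SemilatticeSup α] [OrderBot α] [SemilatticeSup β] [OrderBot β]
    (f : α → β) : Prop :=
  (∀ a b : α, f (a ⊔ b) = f a ⊔ f b) ∧ f ⊥ = ⊥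

/-- A `⟨∨,0⟩`-embedding: an injective `⟨∨,0⟩`-homomorphism. -/
def IsSupBotEmb {α β : Type*} [SemilatticeSup α] [OrderBot α] [SemilatticeSup β] [OrderBot β]
    (f : α → β) : Prop :=
  Function.Injective f ∧ IsSupBotHom f

theorem isSupBotEmb_id {α : Type*} [SemilatticeSup α] [OrderBot α] :
    IsSupBotEmb (id : α → α) :=
  ⟨Function.injective_id, fun _ _ => rfl, rfl⟩

theorem IsSupBotEmb.comp {α β γ : Type*} [SemilatticeSup α] [OrderBot α]
    [SemilatticeSup β] [OrderBot β] [SemilatticeSup γ] [OrderBot γ]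
    {g : β → γ} {f : α → β} (hg : IsSupBotEmb g) (hf : IsSupBotEmb f) :
    IsSupBotEmb (g ∘ f) :=
  ⟨hg.1.comp hf.1,
    fun a b => by simp only [Function.comp_apply, hf.2.1, hg.2.1],
    by simp only [Function.comp_apply, hf.2.2, hg.2.2]⟩

/-- Bundled finite distributive `⟨∨,0⟩`-semilattices. -/
structure FDSemilat : Type 1 where
  carrier : Type
  [instSup : SemilatticeSup carrier]
  [instBot : OrderBot carrier]
  [instFin : Finite carrier]
  distrib : SupDistrib carrier

attribute [instance] FDSemilat.instSup FDSemilat.instBot FDSemilat.instFin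

instance : CoeSort FDSemilat Type := ⟨FDSemilat.carrier⟩

/-- The category `D` of finite distributive `⟨∨,0⟩`-semilattices with
`⟨∨,0⟩`-embeddings as morphisms. -/
instance : Category FDSemilat where
  Hom A B := { f : A → B // IsSupBotEmb f }
  id A := ⟨id, isSupBotEmb_id⟩
  comp f g := ⟨g.1 ∘ f.1, g.2.comp f.2⟩

/-- Bundled finite Boolean `⟨∨,0⟩`-semilattices. -/
structure FBSemilat : Type 1 where
  carrier : Type
  [instSup : SemilatticeSup carrier]
  [instBot : OrderBot carrier]
  [instFin : Finite carrier]
  boolean : ∃ n : ℕ, Nonempty (carrier ≃o Finset (Fin n))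

attribute [instance] FBSemilat.instSup FBSemilat.instBot FBSemilat.instFin

instance : CoeSort FBSemilat Type := ⟨FBSemilat.carrier⟩

/-- Objects of the category `R`: quadruples `(A, B, ε, μ)` where `A` is a finite
distributive `⟨∨,0⟩`-semilattice, `B` is a finite Boolean `⟨∨,0⟩`-semilattice,
`ε : A → B` and `μ : B → A` are `⟨∨,0⟩`-homomorphisms with `μ ∘ ε = id`. -/
structure RObj : Type 1 where
  A : FDSemilat
  B : FBSemilat
  ε : A → B
  μ : B → A
  hε : IsSupBotHom ε
  hμ : IsSupBotHom μ
  retr : μ ∘ ε = id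

/-- Morphisms of `R`: pairs `(f, g)` of `⟨∨,0⟩`-embeddings making both squares commute. -/
instance : Category RObj where
  Hom P Q := { fg : (P.A → Q.A) × (P.B → Q.B) //
    IsSupBotEmb fg.1 ∧ IsSupBotEmb fg.2 ∧
      fg.2 ∘ P.ε = Q.ε ∘ fg.1 ∧ Q.μ ∘ fg.2 = fg.1 ∘ P.μ }
  id P := ⟨(id, id), isSupBotEmb_id, isSupBotEmb_id, rfl, rfl⟩
  comp {P Q R} f g := ⟨(g.1.1 ∘ f.1.1, g.1.2 ∘ f.1.2),
    g.2.1.comp f.2.1, g.2.2.1.comp f.2.2.1,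
    by
      have h1 := f.2.2.2.1
      have h2 := g.2.2.2.1
      calc (g.1.2 ∘ f.1.2) ∘ P.ε = g.1.2 ∘ (f.1.2 ∘ P.ε) := rfl
        _ = g.1.2 ∘ (Q.ε ∘ f.1.1) := by rw [h1]
        _ = (g.1.2 ∘ Q.ε) ∘ f.1.1 := rfl
        _ = (R.ε ∘ g.1.1) ∘ f.1.1 := by rw [h2]
        _ = R.ε ∘ (g.1.1 ∘ f.1.1) := rfl,
    by
      have h1 := f.2.2.2.2
      have h2 := g.2.2.2.2
      calc R.μ ∘ (g.1.2 ∘ f.1.2) = (R.μ ∘ g.1.2) ∘ f.1.2 := rfl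
        _ = (g.1.1 ∘ Q.μ) ∘ f.1.2 := by rw [h2]
        _ = g.1.1 ∘ (Q.μ ∘ f.1.2) := rfl
        _ = g.1.1 ∘ (f.1.1 ∘ P.μ) := by rw [h1]
        _ = (g.1.1 ∘ f.1.1) ∘ P.μ := rfl⟩

/-- The projection functor `Π : R ⥤ D`, sending `(A,B,ε,μ)` to `A` and `(f,g)` to `f`. -/
def projR : RObj ⥤ FDSemilat where
  obj P := P.A
  map f := ⟨f.1.1, f.2.1⟩


section Aux

/-- A computable bottom-element structure on `Fin (n+1)`, taking priority over the
noncomputable one coming from the complete linear order. -/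
instance (priority := high) finOrderBot (n : ℕ) : OrderBot (Fin (n + 1)) where
  bot := 0
  bot_le := Fin.zero_le

theorem supDistrib_of_distribLattice {α : Type} [DistribLattice α] [OrderBot α] :
    SupDistrib α :=
  fun a b c h => ⟨c ⊓ a, c ⊓ b, inf_le_right, inf_le_right, by
    rw [← inf_sup_left, inf_eq_left.mpr h]⟩

/-- The three-element chain as an object of `D`. -/
noncomputable def Cobj : FDSemilat := { carrier := Fin 3, distrib := supDistrib_of_distribLattice }

/-- The one-element semilattice as an object of `D`. -/
noncomputable def oneD : FDSemilat := { carrier := Fin 1, distrib := supDistrib_of_distribLattice }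

/-- The four-element Boolean lattice as an object of `D`. -/
def fourD : FDSemilat := { carrier := Finset (Fin 2), distrib := supDistrib_of_distribLattice }

/-- `2^n` as an object of the Boolean category. -/
def BnB (n : ℕ) : FBSemilat := { carrier := Finset (Fin n), boolean := ⟨n, ⟨OrderIso.refl _⟩⟩ }

def eps0 : Fin 3 → Finset (Fin 2) := fun i => if i = 0 then ∅ else if i = 1 then {0} else {0, 1}

def mu0 : Finset (Fin 2) → Fin 3 := fun s => if s = ∅ then 0 else if s = {0} then 1 else 2

theorem eps0_hom : ∀ a b : Fin 3, eps0 (a ⊔ b) = eps0 a ⊔ eps0 b := by decide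
theorem eps0_bot : eps0 ⊥ = ⊥ := by decide
theorem eps0_inj : Function.Injective eps0 := by intro a b; revert a b; decide
theorem mu0_hom : ∀ a b : Finset (Fin 2), mu0 (a ⊔ b) = mu0 a ⊔ mu0 b := by decide
theorem mu0_bot : mu0 ⊥ = ⊥ := by decide
theorem retr0 : ∀ x : Fin 3, mu0 (eps0 x) = x := by decide

/-- `(C, 2², ε₀, μ₀)` as an object of `R`. -/
noncomputable def P0 : RObj where
  A := Cobj
  B := BnB 2
  ε := eps0
  μ := mu0
  hε := ⟨eps0_hom, eps0_bot⟩
  hμ := ⟨mu0_hom, mu0_bot⟩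
  retr := funext retr0

/-- `(2², 2², id, id)` as an object of `R`. -/
def P1 : RObj where
  A := fourD
  B := BnB 2
  ε := id
  μ := id
  hε := ⟨fun _ _ => rfl, rfl⟩
  hμ := ⟨fun _ _ => rfl, rfl⟩
  retr := rfl

/-- `(1, 2ⁿ)` as an object of `R`. -/
noncomputable def Pn (n : ℕ) : RObj where
  A := oneD
  B := BnB n
  ε := fun _ => ⊥
  μ := fun _ => ⊥
  hε := ⟨fun _ _ => (sup_idem _).symm, rfl⟩
  hμ := ⟨fun _ _ => (sup_idem _).symm, rfl⟩
  retr := funext fun _ => @Subsingleton.elim (Fin 1) _ _ _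

/-- The canonical embedding of the 3-chain into `2²`, as a morphism of `D`. -/
def dEmb : Cobj ⟶ fourD := ⟨eps0, eps0_inj, eps0_hom, eps0_bot⟩

end Aux

/-- The projection functor `Π : R → D` has neither a right adjoint nor a left adjoint. -/
theorem stmt4 :
    (¬ ∃ G : FDSemilat ⥤ RObj, Nonempty (projR ⊣ G)) ∧
    (¬ ∃ G : FDSemilat ⥤ RObj, Nonempty (G ⊣ projR)) := by
  constructor
  · rintro ⟨G, ⟨adj⟩⟩
    set m := Nat.card (G.obj oneD).B.carrier with hm
    have u : Pn m ⟶ G.obj oneD :=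
      (adj.homEquiv (Pn m) oneD) (show projR.obj (Pn m) ⟶ oneD from 𝟙 oneD)
    have hinj : Function.Injective u.1.2 := u.2.2.1.1
    have hle : Nat.card (Pn m).B.carrier ≤ m := Nat.card_le_card_of_injective _ hinj
    have hcard : Nat.card (Pn m).B.carrier = 2 ^ m := by
      show Nat.card (Finset (Fin m)) = 2 ^ m
      simp [Nat.card_eq_fintype_card]
    rw [hcard] at hle
    exact absurd hle (by simpa using (Nat.lt_two_pow_self (n := m)).not_ge)
  · rintro ⟨G, ⟨adj⟩⟩
    set Q := G.obj Cobj with hQ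
    -- unit gives an embedding of the 3-chain into Q.A
    have η : Cobj ⟶ projR.obj Q := adj.unit.app Cobj
    have hηinj : Function.Injective η.1 := η.2.1
    -- ε_Q is injective since μ_Q ∘ ε_Q = id
    have hεinj : Function.Injective Q.ε := by
      intro a b hab
      have h := congrFun Q.retr
      calc a = Q.μ (Q.ε a) := (h a).symm
        _ = Q.μ (Q.ε b) := by rw [hab]
        _ = b := h b
    -- a morphism Q ⟶ P0, giving card Q.A ≤ 3
    have u0 : Q ⟶ P0 :=
      (adj.homEquiv Cobj P0).symm (show Cobj ⟶ projR.obj P0 from 𝟙 Cobj)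
    have hA3 : Nat.card Q.A.carrier ≤ 3 := by
      have h := Nat.card_le_card_of_injective _ u0.2.1.1
      have e : Nat.card P0.A.carrier = 3 := by
        show Nat.card (Fin 3) = 3; simp
      omega
    -- a morphism Q ⟶ P1, forcing μ_Q injective
    have u1 : Q ⟶ P1 := (adj.homEquiv Cobj P1).symm dEmb
    have hsq : P1.μ ∘ u1.1.2 = u1.1.1 ∘ Q.μ := u1.2.2.2.2
    have hμinj : Function.Injective Q.μ := by
      have h2 : Function.Injective (u1.1.1 ∘ Q.μ) := by
        rw [← hsq]; exact u1.2.2.1.1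
      exact Function.Injective.of_comp h2
    -- hence card Q.B ≤ card Q.A ≤ 3
    have hB3 : Nat.card Q.B.carrier ≤ 3 :=
      le_trans (Nat.card_le_card_of_injective _ hμinj) hA3
    -- but C embeds in Q.B via ε_Q ∘ η, so 3 ≤ card Q.B
    have h3B : 3 ≤ Nat.card Q.B.carrier := by
      have hcomp : Function.Injective (Q.ε ∘ η.1) := hεinj.comp hηinj
      have h := Nat.card_le_card_of_injective _ hcomp
      have e : Nat.card Cobj.carrier = 3 := by
        show Nat.card (Fin 3) = 3; simp
      omega
    -- Q.B is Boolean: its cardinality is a power of two, never 3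
    obtain ⟨n, ⟨e⟩⟩ := Q.B.boolean
    have hpow : Nat.card Q.B.carrier = 2 ^ n := by
      rw [Nat.card_congr e.toEquiv]
      simp [Nat.card_eq_fintype_card]
    rw [hpow] at hB3 h3B
    rcases n with _ | _ | n
    · omega
    · omega
    · have h4 : 2 ^ 2 ≤ 2 ^ (n + 2) := Nat.pow_le_pow_right (by norm_num) (by omega)
      omega
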